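/- arXiv:1402.1230 — 6 statements merged into one kernel-verified Lean document; each statement's English description precedes it below -/
import Mathlib

section
/- Let H(z,t) = 1 − t(z_1⋯z_d)S(z) where S(z) is the characteristic polynomial of a step set S ⊆ {−1,0,1}^d \ {0} symmetric about every axis. Write S(z) = (z_k + z_k^{−1}) S_1^{(k)}(z_{\hat{k}}) + S_0^{(k)}(z_{\hat{k}}) where z_{\hat{k}} omits z_k. Then a point (z, t) on the variety H = 0 satisfies the critical point equations H = 0, t H_t = z_1 H_{z_1}, …, t H_t = z_d H_{z_d} if and only if for every k, either z_k = ±1 or the polynomial (z_1⋯z_{k−1} z_{k+1}⋯z_d) S_1^{(k)}(z_{\hat{k}}) vanishes at z. -/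
/-- The polynomial `(z₁⋯z_d)·S(z) = ∑_{s ∈ S} ∏_k z_k^{s_k+1}`. -/
noncomputable def kerPoly (d : ℕ) (S : Finset (Fin d → ℤ)) (z : Fin d → ℂ) : ℂ :=
  ∑ s ∈ S, ∏ k, z k ^ (s k + 1).toNat

/-- `H(z,t) = 1 - t(z₁⋯z_d)S(z)`. -/
noncomputable def Hker (d : ℕ) (S : Finset (Fin d → ℤ)) (z : Fin d → ℂ) (t : ℂ) : ℂ :=
  1 - t * kerPoly d S z

/-- The polynomial `(z₁⋯z_{k-1}z_{k+1}⋯z_d)·S₁^{(k)}(z_{k̂}) = ∑_{s ∈ S, s_k = 1} ∏_{j ≠ k} z_j^{s_j+1}`,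
the inventory of the steps of `S` moving forward in coordinate `k`. -/
noncomputable def Qker (d : ℕ) (S : Finset (Fin d → ℤ)) (k : Fin d) (z : Fin d → ℂ) : ℂ :=
  ∑ s ∈ S.filter (fun s => s k = 1), ∏ j ∈ Finset.univ.erase k, z j ^ (s j + 1).toNat

/-- Characterization of critical points: a point of the variety `H = 0` satisfies the
critical point equations `t H_t = z_k H_{z_k}` (for all `k`) if and only if for every
`k` either `z_k = ±1` or the polynomial `(∏_{j≠k} z_j)·S₁^{(k)}` vanishes at `z`. -/
theorem critical_point_characterization (d : ℕ) (S : Finset (Fin d → ℤ))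
    (hsteps : ∀ s ∈ S, (∀ k, s k = -1 ∨ s k = 0 ∨ s k = 1) ∧ s ≠ 0)
    (hsym : ∀ s ∈ S, ∀ k, Function.update s k (-(s k)) ∈ S)
    (z : Fin d → ℂ) (t : ℂ) (hV : Hker d S z t = 0) :
    (∀ k, t * deriv (fun t' => Hker d S z t') t
            = z k * deriv (fun w => Hker d S (Function.update z k w) t) (z k)) ↔
      (∀ k, z k = 1 ∨ z k = -1 ∨ Qker d S k z = 0) := by
  classical
  set e : (Fin d → ℤ) → Fin d → ℕ := fun s j => (s j + 1).toNat with he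
  set c : Fin d → (Fin d → ℤ) → ℂ :=
    fun k s => ∏ j ∈ Finset.univ.erase k, z j ^ (e s j) with hc
  -- `t * kerPoly = 1`, hence `t ≠ 0`
  have h1 : (1:ℂ) - t * kerPoly d S z = 0 := hV
  have hP : t * kerPoly d S z = 1 := (sub_eq_zero.mp h1).symm
  have ht : t ≠ 0 := left_ne_zero_of_mul_eq_one hP
  -- kerPoly at updated point
  have hupdate : ∀ (k : Fin d) (w : ℂ),
      kerPoly d S (Function.update z k w) = ∑ s ∈ S, w ^ (e s k) * c k s := by
    intro k w
    unfold kerPoly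
    refine Finset.sum_congr rfl fun s hs => ?_
    rw [← Finset.mul_prod_erase Finset.univ _ (Finset.mem_univ k), Function.update_self]
    congr 1
    exact Finset.prod_congr rfl fun j hj => by
      rw [Function.update_of_ne (Finset.mem_erase.mp hj).1]
  have hPk : ∀ k : Fin d, kerPoly d S z = ∑ s ∈ S, (z k) ^ (e s k) * c k s := by
    intro k
    conv_lhs => rw [← Function.update_eq_self k z]
    exact hupdate k (z k)
  -- derivative in t
  have hdt : deriv (fun t' => Hker d S z t') t = -(kerPoly d S z) := by
    have h : HasDerivAt (fun t' : ℂ => 1 - t' * kerPoly d S z) (-(1 * kerPoly d S z)) t :=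
      ((hasDerivAt_id t).mul_const _).const_sub 1
    have h2 : (fun t' => Hker d S z t') = fun t' : ℂ => 1 - t' * kerPoly d S z := rfl
    rw [h2, h.deriv, one_mul]
  -- derivative in z_k
  have hdz : ∀ k : Fin d, deriv (fun w => Hker d S (Function.update z k w) t) (z k)
      = -(t * ∑ s ∈ S, ((e s k : ℂ) * (z k) ^ (e s k - 1)) * c k s) := by
    intro k
    have hD : HasDerivAt (fun w : ℂ => 1 - t * ∑ s ∈ S, w ^ (e s k) * c k s)
        (-(t * ∑ s ∈ S, ((e s k : ℂ) * (z k) ^ (e s k - 1)) * c k s)) (z k) :=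
      (HasDerivAt.const_mul t (HasDerivAt.fun_sum fun s _ =>
        (hasDerivAt_pow (e s k) (z k)).mul_const (c k s))).const_sub 1
    have h2 : (fun w => Hker d S (Function.update z k w) t)
        = fun w : ℂ => 1 - t * ∑ s ∈ S, w ^ (e s k) * c k s := by
      funext w
      unfold Hker
      rw [hupdate k w]
    rw [h2, hD.deriv]
  -- the symmetry bijection
  have hbij : ∀ k : Fin d,
      ∑ s ∈ S.filter (fun s => s k = -1), c k s = Qker d S k z := by
    intro k
    unfold Qker
    refine Finset.sum_nbij' (fun s => Function.update s k 1)
      (fun s => Function.update s k (-1)) ?_ ?_ ?_ ?_ ?_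
    · intro s hs
      obtain ⟨hsS, hsk⟩ := Finset.mem_filter.mp hs
      refine Finset.mem_filter.mpr ⟨?_, Function.update_self _ _ _⟩
      have := hsym s hsS k
      rwa [hsk] at this
    · intro s hs
      obtain ⟨hsS, hsk⟩ := Finset.mem_filter.mp hs
      refine Finset.mem_filter.mpr ⟨?_, Function.update_self _ _ _⟩
      have := hsym s hsS k
      rwa [hsk] at this
    · intro s hs
      obtain ⟨_, hsk⟩ := Finset.mem_filter.mp hs
      show Function.update (Function.update s k 1) k (-1) = s
      rw [Function.update_idem, ← hsk, Function.update_eq_self]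
    · intro s hs
      obtain ⟨_, hsk⟩ := Finset.mem_filter.mp hs
      show Function.update (Function.update s k (-1)) k 1 = s
      rw [Function.update_idem, ← hsk, Function.update_eq_self]
    · intro s hs
      refine Finset.prod_congr rfl fun j hj => ?_
      rw [he]
      simp only []
      rw [Function.update_of_ne (Finset.mem_erase.mp hj).1]
  -- key algebraic identity
  have key : ∀ k : Fin d,
      (∑ s ∈ S, (z k) ^ (e s k) * c k s)
        - z k * (∑ s ∈ S, ((e s k : ℂ) * (z k) ^ (e s k - 1)) * c k s)
      = (1 - (z k)^2) * Qker d S k z := by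
    intro k
    rw [Finset.mul_sum, ← Finset.sum_sub_distrib]
    have hsplit : ∀ s ∈ S,
        (z k) ^ (e s k) * c k s - z k * (((e s k : ℂ) * (z k) ^ (e s k - 1)) * c k s)
        = (if s k = 1 then -((z k)^2 * c k s) else if s k = -1 then c k s else 0) := by
      intro s hs
      rcases (hsteps s hs).1 k with h | h | h
      · have hek : e s k = 0 := by simp [he, h]
        rw [hek]
        simp [h]
      · have hek : e s k = 1 := by simp [he, h]
        rw [hek]
        have h1 : ¬ (s k = 1) := by rw [h]; decide
        have h2 : ¬ (s k = -1) := by rw [h]; decide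
        simp [h1, h2]
      · have hek : e s k = 2 := by simp [he, h]
        rw [hek]
        simp [h]
        ring
    rw [Finset.sum_congr rfl hsplit, Finset.sum_ite, ← Finset.sum_filter,
      Finset.filter_filter]
    have hff : S.filter (fun s => ¬ s k = 1 ∧ s k = -1) = S.filter (fun s => s k = -1) := by
      refine Finset.filter_congr fun s hs => ?_
      constructor
      · exact fun h => h.2
      · intro h
        refine ⟨?_, h⟩
        rw [h]; decide
    rw [hff, hbij k, Finset.sum_neg_distrib, ← Finset.mul_sum]
    have : ∑ s ∈ S.filter (fun s => s k = 1), c k s = Qker d S k z := by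
      unfold Qker
      rfl
    rw [this]
    ring
  -- put it all together
  refine forall_congr' fun k => ?_
  rw [hdt, hdz k]
  constructor
  · intro hk
    have h0 : t * ((∑ s ∈ S, (z k) ^ (e s k) * c k s)
        - z k * (∑ s ∈ S, ((e s k : ℂ) * (z k) ^ (e s k - 1)) * c k s)) = 0 := by
      rw [hPk k] at hk
      linear_combination -hk
    rw [key k] at h0
    rcases mul_eq_zero.mp h0 with h | h
    · exact absurd h ht
    rcases mul_eq_zero.mp h with h | h
    · have hz : (z k - 1) * (z k + 1) = 0 := by linear_combination -h
      rcases mul_eq_zero.mp hz with h' | h'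
      · exact Or.inl (sub_eq_zero.mp h')
      · exact Or.inr (Or.inl (eq_neg_of_add_eq_zero_left h'))
    · exact Or.inr (Or.inr h)
  · intro hk
    have hq : (1 - (z k)^2) * Qker d S k z = 0 := by
      rcases hk with h | h | h
      · rw [h]; ring
      · rw [h]; ring
      · rw [h, mul_zero]
    have h1 : kerPoly d S z
        - z k * (∑ s ∈ S, ((e s k : ℂ) * (z k) ^ (e s k - 1)) * c k s) = 0 := by
      rw [hPk k, key k, hq]
    linear_combination (-t) * h1
end

section
/- Let S ⊆ {−1,0,1}^d \ {0} be symmetric about every axis and take at least one step with k-th coordinate +1 for each k. If (w, t_w) ∈ ℂ^{d+1} satisfies 1 − t_w (w_1⋯w_d) S(w) = 0, |t_w| ≤ 1/|S|, and |w_j| ≤ 1 for all j, then w_j ∈ {−1, 1} for every j and |t_w| = 1/|S|. Consequently the closed polydisk D centered at the origin with radii (1,…,1,1/|S|) meets the variety {H = 0} in at most 2^d points, all on the boundary torus. -/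
theorem key_lemma (d : ℕ) (S : Finset (Fin d → ℤ))
    (hsym : ∀ s ∈ S, ∀ k, Function.update s k (-(s k)) ∈ S)
    (hfwd : ∀ k, ∃ s ∈ S, s k = 1)
    (w : Fin d → ℂ) (tw : ℂ)
    (heq : 1 - tw * kerPoly d S w = 0)
    (htw : ‖tw‖ ≤ 1 / S.card)
    (hw : ∀ j, ‖w j‖ ≤ 1) :
    (∀ j, w j = 1 ∨ w j = -1) ∧ ‖tw‖ = 1 / S.card := by
  have heq' : tw * kerPoly d S w = 1 := (sub_eq_zero.mp heq).symm
  have hS : S.Nonempty := by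
    rcases S.eq_empty_or_nonempty with h | h
    · exfalso; rw [kerPoly, h] at heq'; simp at heq'
    · exact h
  have hnpos : 0 < (S.card : ℝ) := by exact_mod_cast Finset.card_pos.mpr hS
  set n : ℝ := (S.card : ℝ) with hn
  -- each term has modulus at most 1
  have hterm : ∀ s : Fin d → ℤ, ‖∏ k, w k ^ (s k + 1).toNat‖ ≤ 1 := by
    intro s
    rw [norm_prod]
    calc ∏ k, ‖w k ^ (s k + 1).toNat‖
        ≤ ∏ k : Fin d, (1 : ℝ) := by
          apply Finset.prod_le_prod
          · intro i _; positivity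
          · intro i _; rw [norm_pow]; exact pow_le_one₀ (norm_nonneg _) (hw i)
      _ = 1 := by simp
  have hKle : ‖kerPoly d S w‖ ≤ n := by
    rw [kerPoly]
    calc ‖∑ s ∈ S, ∏ k, w k ^ (s k + 1).toNat‖
        ≤ ∑ s ∈ S, ‖∏ k, w k ^ (s k + 1).toNat‖ := norm_sum_le _ _
      _ ≤ ∑ s ∈ S, (1 : ℝ) := Finset.sum_le_sum (fun s _ => hterm s)
      _ = n := by simp [hn]
  have h1 : ‖tw‖ * ‖kerPoly d S w‖ = 1 := by
    rw [← norm_mul, heq', norm_one]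
  have hKn : ‖kerPoly d S w‖ = n := by
    have h2 : ‖tw‖ ≤ 1 / n := htw
    have h3 := mul_le_mul_of_nonneg_right h2 (norm_nonneg (kerPoly d S w))
    rw [h1] at h3
    have h4 : n ≤ ‖kerPoly d S w‖ := by
      rw [div_mul_eq_mul_div, one_mul, le_div_iff₀ hnpos] at h3
      linarith
    linarith
  have htwn : ‖tw‖ = 1 / n := by
    rw [hKn] at h1
    field_simp at h1 ⊢
    linarith
  -- equality case in the triangle inequality: all terms are equal
  set K := kerPoly d S w with hK
  set u : ℂ := (starRingEnd ℂ) K / n with hu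
  have huabs : ‖u‖ = 1 := by
    rw [hu, norm_div, Complex.norm_conj, hKn, Complex.norm_real, Real.norm_eq_abs, abs_of_pos hnpos,
      div_self (ne_of_gt hnpos)]
  have hsumre : ∑ s ∈ S, (u * ∏ k, w k ^ (s k + 1).toNat).re = n := by
    have : ∑ s ∈ S, (u * ∏ k, w k ^ (s k + 1).toNat) = u * K := by
      rw [← Finset.mul_sum]; rw [hK, kerPoly]
    have h3 : (u * K).re = n := by
      rw [hu, div_mul_eq_mul_div, mul_comm, Complex.mul_conj]
      rw [div_eq_mul_inv, ← Complex.ofReal_inv, ← Complex.ofReal_mul, Complex.ofReal_re]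
      rw [← Complex.sq_norm, hKn]
      field_simp [sq]
    rw [← Complex.re_sum, this, h3]
  have hre1 : ∀ s ∈ S, (u * ∏ k, w k ^ (s k + 1).toNat).re = 1 := by
    by_contra hcon
    push_neg at hcon
    obtain ⟨s0, hs0, hne⟩ := hcon
    have hle : ∀ s ∈ S, (u * ∏ k, w k ^ (s k + 1).toNat).re ≤ 1 := by
      intro s _
      calc (u * ∏ k, w k ^ (s k + 1).toNat).re
          ≤ ‖u * ∏ k, w k ^ (s k + 1).toNat‖ := Complex.re_le_norm _
        _ ≤ 1 := by rw [norm_mul, huabs, one_mul]; exact hterm s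
    have hlt : ∑ s ∈ S, (u * ∏ k, w k ^ (s k + 1).toNat).re < ∑ s ∈ S, (1:ℝ) :=
      Finset.sum_lt_sum hle ⟨s0, hs0, lt_of_le_of_ne (hle s0 hs0) hne⟩
    rw [hsumre] at hlt
    simp [hn] at hlt
  -- each u * term = 1
  have hueq : ∀ s ∈ S, u * ∏ k, w k ^ (s k + 1).toNat = 1 := by
    intro s hs
    set z := u * ∏ k, w k ^ (s k + 1).toNat with hz
    have habs : ‖z‖ ≤ 1 := by
      rw [hz, norm_mul, huabs, one_mul]; exact hterm s
    have hzre : z.re = 1 := hre1 s hs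
    have him : z.im = 0 := by
      have h4 : z.re ^ 2 + z.im ^ 2 ≤ 1 := by
        nlinarith [Complex.sq_norm z, Complex.normSq_apply z, norm_nonneg z]
      have h7 : z.im ^ 2 = 0 := le_antisymm (by nlinarith) (sq_nonneg _)
      exact pow_eq_zero_iff two_ne_zero |>.mp h7
    exact Complex.ext (by simp [hzre]) (by simp [him])
  have hune : u ≠ 0 := by
    intro h; rw [h] at huabs; simp at huabs
  -- all terms equal; use symmetry to get w k ^ 2 = 1
  have hwk : ∀ j, w j = 1 ∨ w j = -1 := by
    intro k
    obtain ⟨s, hsS, hsk⟩ := hfwd k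
    have hs'S : Function.update s k (-(s k)) ∈ S := hsym s hsS k
    set s' := Function.update s k (-(s k)) with hs'
    have hP : ∀ j ∈ Finset.univ.erase k, w j ^ (s' j + 1).toNat = w j ^ (s j + 1).toNat := by
      intro j hj
      rw [hs', Function.update_of_ne (Finset.mem_erase.mp hj).1]
    set P : ℂ := ∏ j ∈ Finset.univ.erase k, w j ^ (s j + 1).toNat with hPdef
    have h2nat : (((1:ℤ)) + 1).toNat = 2 := rfl
    have e1 : (∏ j, w j ^ (s j + 1).toNat) = w k ^ 2 * P := by
      rw [← Finset.mul_prod_erase Finset.univ _ (Finset.mem_univ k), hsk, h2nat]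
    have e2 : (∏ j, w j ^ (s' j + 1).toNat) = P := by
      rw [← Finset.mul_prod_erase Finset.univ _ (Finset.mem_univ k)]
      have hk0 : (s' k + 1).toNat = 0 := by
        rw [hs', Function.update_self, hsk]; rfl
      rw [hk0, pow_zero, one_mul]
      exact Finset.prod_congr rfl hP
    have t1 := hueq s hsS
    have t2 := hueq s' hs'S
    rw [e1] at t1
    rw [e2] at t2
    have hPne : P ≠ 0 := by
      intro h; rw [h, mul_zero] at t2; exact one_ne_zero t2.symm
    have hsq : w k ^ 2 = 1 := by
      have h5 : (w k ^ 2 - 1) * (u * P) = 0 := by linear_combination t1 - t2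
      rcases mul_eq_zero.mp h5 with h | h
      · exact sub_eq_zero.mp h
      · exact absurd h (mul_ne_zero hune hPne)
    have h6 : (w k - 1) * (w k + 1) = 0 := by linear_combination hsq
    rcases mul_eq_zero.mp h6 with h | h
    · left; exact sub_eq_zero.mp h
    · right; exact eq_neg_of_add_eq_zero_left h
  exact ⟨hwk, htwn⟩

/-- Minimality: any point of the variety `{1 - t(z₁⋯z_d)S(z) = 0}` lying in the closed
polydisk of radii `(1,…,1,1/|S|)` has all `w_j = ±1` and `|t_w| = 1/|S|`; consequently the
polydisk meets the variety in at most `2^d` points. -/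
theorem minimal_points (d : ℕ) (S : Finset (Fin d → ℤ))
    (hsteps : ∀ s ∈ S, (∀ k, s k = -1 ∨ s k = 0 ∨ s k = 1) ∧ s ≠ 0)
    (hsym : ∀ s ∈ S, ∀ k, Function.update s k (-(s k)) ∈ S)
    (hfwd : ∀ k, ∃ s ∈ S, s k = 1) :
    (∀ (w : Fin d → ℂ) (tw : ℂ),
        1 - tw * kerPoly d S w = 0 →
        ‖tw‖ ≤ 1 / S.card →
        (∀ j, ‖w j‖ ≤ 1) →
        (∀ j, w j = 1 ∨ w j = -1) ∧ ‖tw‖ = 1 / S.card) ∧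
    ({p : (Fin d → ℂ) × ℂ |
        1 - p.2 * kerPoly d S p.1 = 0 ∧ ‖p.2‖ ≤ 1 / S.card ∧
        ∀ j, ‖p.1 j‖ ≤ 1}.Finite ∧
      {p : (Fin d → ℂ) × ℂ |
        1 - p.2 * kerPoly d S p.1 = 0 ∧ ‖p.2‖ ≤ 1 / S.card ∧
        ∀ j, ‖p.1 j‖ ≤ 1}.ncard ≤ 2 ^ d) := by
  classical
  have key := fun w tw h1 h2 h3 => key_lemma d S hsym hfwd w tw h1 h2 h3
  refine ⟨key, ?_⟩
  set P : Set ((Fin d → ℂ) × ℂ) := {p : (Fin d → ℂ) × ℂ |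
        1 - p.2 * kerPoly d S p.1 = 0 ∧ ‖p.2‖ ≤ 1 / S.card ∧
        ∀ j, ‖p.1 j‖ ≤ 1} with hP
  -- fst is injective on P
  have hinj : Set.InjOn Prod.fst P := by
    rintro ⟨w1, t1⟩ h1 ⟨w2, t2⟩ h2 hfst
    simp only [hP, Set.mem_setOf_eq] at h1 h2
    simp only at hfst
    subst hfst
    have e1 : t1 * kerPoly d S w1 = 1 := (sub_eq_zero.mp h1.1).symm
    have e2 : t2 * kerPoly d S w1 = 1 := (sub_eq_zero.mp h2.1).symm
    have hKne : kerPoly d S w1 ≠ 0 := by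
      intro h; rw [h, mul_zero] at e1; exact one_ne_zero e1.symm
    have : t1 = t2 := mul_right_cancel₀ hKne (e1.trans e2.symm)
    rw [this]
  -- image of fst lands in range of g
  set g : (Fin d → Bool) → (Fin d → ℂ) := fun b j => if b j then 1 else -1 with hg
  have hsub : Prod.fst '' P ⊆ Set.range g := by
    rintro w ⟨⟨w', t⟩, hp, rfl⟩
    simp only [hP, Set.mem_setOf_eq] at hp
    have hpm := (key w' t hp.1 hp.2.1 hp.2.2).1
    refine ⟨fun j => if w' j = 1 then true else false, ?_⟩
    funext j
    by_cases h1 : w' j = 1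
    · simp [hg, h1]
    · have h2 : w' j = -1 := (hpm j).resolve_left h1
      simp only [hg, h1, if_false, h2]
      norm_num
  have hrfin : (Set.range g).Finite := Set.finite_range g
  have himfin : (Prod.fst '' P).Finite := hrfin.subset hsub
  have hPfin : P.Finite := Set.Finite.of_finite_image himfin hinj
  refine ⟨hPfin, ?_⟩
  calc P.ncard = (Prod.fst '' P).ncard := (Set.ncard_image_of_injOn hinj).symm
    _ ≤ (Set.range g).ncard := Set.ncard_le_ncard hsub hrfin
    _ ≤ 2 ^ d := by
        rw [← Set.image_univ]
        calc (g '' Set.univ).ncard ≤ Set.univ.ncard := Set.ncard_image_le Set.finite_univ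
          _ = 2 ^ d := by
              rw [Set.ncard_univ]
              simp [Nat.card_eq_fintype_card]
end

section
/- Let S ⊆ {−1,0,1}^d \ {0} be symmetric about every axis with at least one step moving forward in each coordinate, and let w ∈ {−1,1}^d with t_w = 1/((w_1⋯w_d) S(w)) satisfying |t_w| = 1/|S|. Then for every k, the value S_1^{(k)}(w_{\hat{k}}) of the sub-polynomial collecting steps with k-th coordinate 1 is nonzero. -/
/-- The characteristic Laurent polynomial `S(z) = ∑_{s ∈ S} z^s`, evaluated. -/
noncomputable def charPoly (d : ℕ) (S : Finset (Fin d → ℤ)) (z : Fin d → ℂ) : ℂ :=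
  ∑ s ∈ S, ∏ k, z k ^ s k

/-- `S₁^{(k)}(z_{k̂}) = ∑_{s ∈ S, s_k = 1} ∏_{j ≠ k} z_j^{s_j}`, the inventory of steps
with `k`-th coordinate `1`, in the remaining variables. -/
noncomputable def S1 (d : ℕ) (S : Finset (Fin d → ℤ)) (k : Fin d) (z : Fin d → ℂ) : ℂ :=
  ∑ s ∈ S.filter (fun s => s k = 1), ∏ j ∈ Finset.univ.erase k, z j ^ s j

/-- At any minimal point `w ∈ {-1,1}^d` with `t_w = 1/((w₁⋯w_d)S(w))` of modulus `1/|S|`,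
each sub-polynomial `S₁^{(k)}` is nonzero. -/
theorem S1_nonzero_at_minimal_points (d : ℕ) (S : Finset (Fin d → ℤ))
    (hsteps : ∀ s ∈ S, (∀ k, s k = -1 ∨ s k = 0 ∨ s k = 1) ∧ s ≠ 0)
    (hsym : ∀ s ∈ S, ∀ k, Function.update s k (-(s k)) ∈ S)
    (hfwd : ∀ k, ∃ s ∈ S, s k = 1)
    (w : Fin d → ℂ) (hw : ∀ j, w j = 1 ∨ w j = -1)
    (tw : ℂ) (htw : tw = 1 / ((∏ j, w j) * charPoly d S w))
    (hmin : ‖tw‖ = 1 / S.card) :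
    ∀ k, S1 d S k w ≠ 0 := by
  classical
  intro k
  set T : (Fin d → ℤ) → ℂ := fun s => ∏ j, w j ^ s j with hT
  have hwne : ∀ j, w j ≠ 0 := by
    intro j; rcases hw j with h | h <;> rw [h] <;> norm_num
  have habs1 : ∀ j, ‖w j‖ = 1 := by
    intro j; rcases hw j with h | h <;> rw [h] <;> simp
  have hfac : ∀ (s : Fin d → ℤ) (j : Fin d), w j ^ s j * w j ^ s j = 1 := by
    intro s j
    rw [← mul_zpow]
    rcases hw j with h | h <;> rw [h] <;> norm_num
  have hTpm : ∀ s ∈ S, T s = 1 ∨ T s = -1 := by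
    intro s hs
    rw [← mul_self_eq_one_iff, hT]
    simp only
    rw [← Finset.prod_mul_distrib]
    exact Finset.prod_eq_one (fun j _ => hfac s j)
  obtain ⟨s₀, hs₀S, hs₀k⟩ := hfwd k
  have hSne : S.Nonempty := ⟨s₀, hs₀S⟩
  have hScard : (0:ℝ) < S.card := by exact_mod_cast Finset.card_pos.mpr hSne
  set P := S.filter (fun s => T s = 1) with hP
  set N := S.filter (fun s => ¬ T s = 1) with hN
  have hcardPN : P.card + N.card = S.card :=
    Finset.card_filter_add_card_filter_not _
  have hsum : charPoly d S w = (P.card : ℂ) - N.card := by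
    have h1 : ∑ s ∈ P, T s = (P.card : ℂ) := by
      rw [Finset.sum_congr rfl (fun s hs => (Finset.mem_filter.mp hs).2)]
      simp [hP]
    have h2 : ∑ s ∈ N, T s = -(N.card : ℂ) := by
      have : ∑ s ∈ N, T s = ∑ _s ∈ N, (-1 : ℂ) := by
        refine Finset.sum_congr rfl (fun s hs => ?_)
        obtain ⟨hsS, hsne⟩ := Finset.mem_filter.mp hs
        rcases hTpm s hsS with h | h
        · exact absurd h hsne
        · exact h
      rw [this]; simp
    have : charPoly d S w = ∑ s ∈ S, T s := rfl
    rw [this, ← Finset.sum_filter_add_sum_filter_not S (fun s => T s = 1) T,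
      ← hP, ← hN, h1, h2]
    ring
  have hprodabs : ‖∏ j, w j‖ = 1 := by
    rw [norm_prod]; exact Finset.prod_eq_one fun j _ => habs1 j
  have habstw : ‖tw‖ = 1 / ‖charPoly d S w‖ := by
    rw [htw, norm_div, norm_mul, norm_one, hprodabs, one_mul]
  have hCne : ‖charPoly d S w‖ ≠ 0 := by
    intro h
    rw [habstw, h] at hmin
    have : (0:ℝ) < 1 / S.card := by positivity
    rw [← hmin] at this
    norm_num at this
  have habsC : ‖charPoly d S w‖ = S.card := by
    rw [habstw] at hmin
    have hc : (S.card : ℝ) ≠ 0 := ne_of_gt hScard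
    field_simp at hmin
    linarith
  have hZ : |(P.card : ℤ) - N.card| = (P.card : ℤ) + N.card := by
    have h1 : charPoly d S w = (((P.card : ℤ) - N.card : ℤ) : ℂ) := by
      rw [hsum]; push_cast; ring
    have h2 : (|(P.card : ℤ) - N.card| : ℝ) = ((P.card + N.card : ℕ) : ℝ) := by
      rw [← hcardPN] at habsC
      rw [← habsC, h1, Complex.norm_intCast]
      push_cast
      ring
    exact_mod_cast h2
  have hcases : P.card = 0 ∨ N.card = 0 := by
    rcases abs_cases ((P.card : ℤ) - N.card) with ⟨he, _⟩ | ⟨he, _⟩ <;>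
      rw [he] at hZ <;> omega
  have hε : ∃ ε : ℂ, ε ≠ 0 ∧ ∀ s ∈ S, T s = ε := by
    rcases hcases with h | h
    · refine ⟨-1, by norm_num, fun s hs => ?_⟩
      have hPe : P = ∅ := Finset.card_eq_zero.mp h
      rcases hTpm s hs with h1 | h1
      · exact absurd (hPe ▸ Finset.mem_filter.mpr ⟨hs, h1⟩) (Finset.notMem_empty s)
      · exact h1
    · refine ⟨1, one_ne_zero, fun s hs => ?_⟩
      have hNe : N = ∅ := Finset.card_eq_zero.mp h
      rcases hTpm s hs with h1 | h1
      · exact h1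
      · have : T s ≠ 1 := by rw [h1]; norm_num
        exact absurd (hNe ▸ Finset.mem_filter.mpr ⟨hs, this⟩) (Finset.notMem_empty s)
  obtain ⟨ε, hεne, hεall⟩ := hε
  have hwk2 : w k * w k = 1 := by
    rcases hw k with h | h <;> rw [h] <;> norm_num
  set F := S.filter (fun s => s k = 1) with hF
  have hFs₀ : s₀ ∈ F := Finset.mem_filter.mpr ⟨hs₀S, hs₀k⟩
  have hFcard : F.card ≠ 0 := Finset.card_ne_zero_of_mem hFs₀
  have hg : ∀ s ∈ F, (∏ j ∈ Finset.univ.erase k, w j ^ s j) = w k * ε := by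
    intro s hs
    obtain ⟨hsS, hsk⟩ := Finset.mem_filter.mp hs
    have hTeq : T s = w k * ∏ j ∈ Finset.univ.erase k, w j ^ s j := by
      rw [hT]
      simp only
      rw [← Finset.mul_prod_erase Finset.univ _ (Finset.mem_univ k), hsk, zpow_one]
    have := hεall s hsS
    rw [hTeq] at this
    calc (∏ j ∈ Finset.univ.erase k, w j ^ s j)
        = (w k * w k) * ∏ j ∈ Finset.univ.erase k, w j ^ s j := by rw [hwk2, one_mul]
      _ = w k * (w k * ∏ j ∈ Finset.univ.erase k, w j ^ s j) := by ring
      _ = w k * ε := by rw [this]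
  have hS1 : S1 d S k w = (F.card : ℂ) * (w k * ε) := by
    rw [S1, ← hF, Finset.sum_congr rfl hg]
    simp [mul_comm]
  rw [hS1]
  exact mul_ne_zero (by exact_mod_cast hFcard) (mul_ne_zero (hwne k) hεne)
end

section
/- Let s_i(n) count walks of length n starting at the origin, taking steps in a highly symmetric, non-trivial step set S ⊆ {−1,0,1}^d \ {0}, staying in ℕ^d, and ending at i ∈ ℕ^d. Then the multivariate generating function F(z,t) = ∑_{n,i} s_i(n) z^i t^n satisfies a functional equation of the form (z_1⋯z_d)(1 − t S(z)) F(z,t) = z_1⋯z_d + ∑_{k=1}^d A_k(z_{\hat{k}}, t), where each A_k is a formal power series in t with coefficients polynomial in the variables z_j with j ≠ k (i.e., not involving z_k). -/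
/-- The number of walks of length `n`, taking steps in `S`, starting at the origin,
staying in the non-negative orthant `ℕ^d`, and ending at `i`. -/
noncomputable def WalkCount (d : ℕ) (S : Finset (Fin d → ℤ)) (n : ℕ) (i : Fin d → ℤ) : ℕ :=
  Nat.card {w : Fin n → (Fin d → ℤ) //
    (∀ m, w m ∈ S) ∧
    (∀ m : ℕ, ∀ k, 0 ≤ ∑ l ∈ Finset.univ.filter (fun l : Fin n => (l : ℕ) < m), w l k) ∧
    (∀ k, ∑ m, w m k = i k)}

/-- The multivariate generating function `F(z,t) ∈ ℚ[z₁,…,z_d][[t]]` of the walks,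
whose coefficient of `t^n` is the polynomial `∑_i s_i(n) z^i` (endpoints of length-`n`
walks lie in `[0,n]^d`). -/
noncomputable def walkGF (d : ℕ) (S : Finset (Fin d → ℤ)) :
    PowerSeries (MvPolynomial (Fin d) ℚ) :=
  PowerSeries.mk fun n =>
    ∑ i : Fin d → Fin (n + 1),
      MvPolynomial.C ((WalkCount d S n fun j => ((i j : ℕ) : ℤ)) : ℚ) *
        ∏ j, MvPolynomial.X j ^ (i j : ℕ)

/-- The polynomial `(z₁⋯z_d)·S(z)`. -/
noncomputable def kerMv (d : ℕ) (S : Finset (Fin d → ℤ)) : MvPolynomial (Fin d) ℚ :=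
  ∑ s ∈ S, ∏ j, MvPolynomial.X j ^ (s j + 1).toNat

/-- The walk space as a type. -/
abbrev WS (d : ℕ) (S : Finset (Fin d → ℤ)) (n : ℕ) (i : Fin d → ℤ) :=
  {w : Fin n → (Fin d → ℤ) //
    (∀ m, w m ∈ S) ∧
    (∀ m : ℕ, ∀ k, 0 ≤ ∑ l ∈ Finset.univ.filter (fun l : Fin n => (l : ℕ) < m), w l k) ∧
    (∀ k, ∑ m, w m k = i k)}

lemma WalkCount_eq (d : ℕ) (S : Finset (Fin d → ℤ)) (n : ℕ) (i : Fin d → ℤ) :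
    WalkCount d S n i = Nat.card (WS d S n i) := rfl

instance WS.finite (d : ℕ) (S : Finset (Fin d → ℤ)) (n : ℕ) (i : Fin d → ℤ) :
    Finite (WS d S n i) := by
  apply Finite.of_injective (fun w : WS d S n i => (fun m => (⟨w.1 m, w.2.1 m⟩ : S)))
  intro w w' h
  exact Subtype.ext (funext fun m => congrArg Subtype.val (congrFun h m))

lemma filter_univ_of_ge {n m : ℕ} (h : n ≤ m) :
    Finset.univ.filter (fun l : Fin n => (l : ℕ) < m) = Finset.univ := by
  ext l; simp; omega

/-- key sum reindex -/
lemma sum_filter_castSucc {M : Type*} [AddCommMonoid M] {n m : ℕ} (hm : m ≤ n)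
    (f : Fin (n+1) → M) :
    ∑ l ∈ Finset.univ.filter (fun l : Fin (n+1) => (l : ℕ) < m), f l =
    ∑ l ∈ Finset.univ.filter (fun l : Fin n => (l : ℕ) < m), f l.castSucc := by
  rw [Finset.sum_filter, Finset.sum_filter, Fin.sum_univ_castSucc]
  simp only [Fin.coe_castSucc, Fin.val_last]
  rw [if_neg (by omega)]
  simp

lemma WS.endpoint_nonneg {d : ℕ} {S : Finset (Fin d → ℤ)} {n : ℕ} {i : Fin d → ℤ}
    (w : WS d S n i) (k : Fin d) : 0 ≤ i k := by
  have h := w.2.2.1 n k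
  rw [filter_univ_of_ge le_rfl] at h
  rwa [w.2.2.2 k] at h

lemma WalkCount_eq_zero_of_neg {d : ℕ} {S : Finset (Fin d → ℤ)} {n : ℕ} {i : Fin d → ℤ}
    (k : Fin d) (hk : i k < 0) : WalkCount d S n i = 0 := by
  rw [WalkCount_eq]
  rw [Nat.card_eq_zero]
  left
  constructor
  intro w
  exact absurd (WS.endpoint_nonneg w k) (not_le.2 hk)

lemma WalkCount_eq_zero_of_big {d : ℕ} {S : Finset (Fin d → ℤ)}
    (hsteps : ∀ s ∈ S, (∀ k, s k = -1 ∨ s k = 0 ∨ s k = 1) ∧ s ≠ 0)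
    {n : ℕ} {i : Fin d → ℤ} (k : Fin d) (hk : (n : ℤ) < i k) : WalkCount d S n i = 0 := by
  rw [WalkCount_eq, Nat.card_eq_zero]
  left
  constructor
  intro w
  have hle : i k ≤ (n : ℤ) := by
    rw [← w.2.2.2 k]
    calc ∑ m, w.1 m k ≤ ∑ _m : Fin n, (1 : ℤ) := by
          apply Finset.sum_le_sum
          intro m _
          rcases (hsteps _ (w.2.1 m)).1 k with h | h | h <;> omega
      _ = n := by simp
  omega

/-- Walk recursion. -/
lemma walkCount_rec {d : ℕ} (S : Finset (Fin d → ℤ)) (n : ℕ) (i : Fin d → ℤ)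
    (hi : ∀ k, 0 ≤ i k) :
    WalkCount d S (n+1) i = ∑ s ∈ S, WalkCount d S n (fun k => i k - s k) := by
  classical
  -- the gluing map
  set T := Σ s : {x // x ∈ S}, WS d S n (fun k => i k - s.1 k) with hT
  let V : T → (Fin (n+1) → Fin d → ℤ) := fun p => Fin.snoc p.2.1 p.1.1
  have hG : ∀ p : T, (∀ m, V p m ∈ S) ∧
      (∀ m : ℕ, ∀ k, 0 ≤ ∑ l ∈ Finset.univ.filter (fun l : Fin (n+1) => (l : ℕ) < m),
        V p l k) ∧
      (∀ k, ∑ m, V p m k = i k) := by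
    rintro ⟨s, w⟩
    simp only [V]
    have htot : ∀ k, ∑ m : Fin (n+1), Fin.snoc (α := fun _ => Fin d → ℤ) w.1 s.1 m k = i k := by
      intro k
      rw [Fin.sum_univ_castSucc]
      simp only [Fin.snoc_castSucc, Fin.snoc_last]
      have := w.2.2.2 k
      have : ∑ m : Fin n, w.1 m k = i k - s.1 k := this
      rw [this]; ring
    refine ⟨?_, ?_, htot⟩
    · intro m
      induction m using Fin.lastCases with
      | last => simpa using s.2
      | cast m => simpa using w.2.1 m
    · intro m k
      by_cases hm : m ≤ n
      · rw [sum_filter_castSucc hm]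
        simp only [Fin.snoc_castSucc]
        exact w.2.2.1 m k
      · rw [filter_univ_of_ge (by omega)]
        rw [htot k]
        exact hi k
  let G : T → WS d S (n+1) i := fun p => ⟨V p, hG p⟩
  have hGbij : Function.Bijective G := by
    constructor
    · rintro ⟨s, w⟩ ⟨s', w'⟩ h
      have hval : V ⟨s, w⟩ = V ⟨s', w'⟩ := congrArg Subtype.val h
      have hs : s = s' := by
        apply Subtype.ext
        have := congrFun hval (Fin.last n)
        simpa [V] using this
      subst hs
      have hw : w = w' := by
        apply Subtype.ext
        funext m
        have := congrFun hval m.castSucc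
        simpa [V] using this
      rw [hw]
    · intro v
      refine ⟨⟨⟨v.1 (Fin.last n), v.2.1 _⟩, ⟨fun m => v.1 m.castSucc, ?_, ?_, ?_⟩⟩, ?_⟩
      · intro m; exact v.2.1 _
      · intro m k
        have hfe : Finset.univ.filter (fun l : Fin n => (l : ℕ) < m) =
            Finset.univ.filter (fun l : Fin n => (l : ℕ) < min m n) := by
          ext l; simp only [Finset.mem_filter, Finset.mem_univ, true_and]
          have := l.isLt; omega
        rw [hfe]
        have key : 0 ≤ ∑ l ∈ Finset.univ.filter (fun l : Fin n => (l : ℕ) < min m n),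
            v.1 l.castSucc k := by
          rw [← sum_filter_castSucc (Nat.min_le_right m n) (fun l => v.1 l k)]
          exact v.2.2.1 (min m n) k
        exact key
      · intro k
        show ∑ m : Fin n, v.1 m.castSucc k = i k - v.1 (Fin.last n) k
        have h2 := v.2.2.2 k
        rw [Fin.sum_univ_castSucc] at h2
        omega
      · apply Subtype.ext
        funext m
        induction m using Fin.lastCases with
        | last => simp [G, V]
        | cast m => simp [G, V]
  have hcard : Nat.card (WS d S (n+1) i) = Nat.card T := (Nat.card_eq_of_bijective G hGbij).symm
  rw [WalkCount_eq, hcard]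
  haveI : ∀ s : {x // x ∈ S}, Fintype (WS d S n (fun k => i k - s.1 k)) :=
    fun s => Fintype.ofFinite _
  rw [hT, Nat.card_eq_fintype_card, Fintype.card_sigma]
  rw [← Finset.sum_coe_sort S (fun s => WalkCount d S n (fun k => i k - s k))]
  congr 1
  funext s
  rw [WalkCount_eq, Nat.card_eq_fintype_card]

open MvPolynomial in
lemma coeff_walkGF {d : ℕ} {S : Finset (Fin d → ℤ)}
    (hsteps : ∀ s ∈ S, (∀ k, s k = -1 ∨ s k = 0 ∨ s k = 1) ∧ s ≠ 0)
    (n : ℕ) (e : Fin d →₀ ℕ) :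
    MvPolynomial.coeff e (PowerSeries.coeff n (walkGF d S)) =
      (WalkCount d S n (fun j => (e j : ℤ)) : ℚ) := by
  classical
  rw [walkGF, PowerSeries.coeff_mk]
  have hmon : ∀ i : Fin d → Fin (n+1),
      (∏ j, (MvPolynomial.X j : MvPolynomial (Fin d) ℚ) ^ (i j : ℕ)) =
      monomial (Finsupp.equivFunOnFinite.symm (fun j => (i j : ℕ))) 1 := by
    intro i
    set f := Finsupp.equivFunOnFinite.symm (fun j => (i j : ℕ)) with hfdef
    have hf : ∀ j, f j = (i j : ℕ) := fun j => rfl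
    rw [← MvPolynomial.prod_X_pow_eq_monomial]
    simp_rw [← hf]
    refine (Finset.prod_subset (Finset.subset_univ _) fun x _ hx => ?_).symm
    have : f x = 0 := by simpa [Finsupp.mem_support_iff] using hx
    simp [this]
  rw [MvPolynomial.coeff_sum]
  simp_rw [hmon, MvPolynomial.coeff_C_mul, MvPolynomial.coeff_monomial]
  by_cases hbig : ∀ j, e j ≤ n
  · set i₀ : Fin d → Fin (n+1) := fun j => ⟨e j, Nat.lt_succ_of_le (hbig j)⟩ with hi₀
    rw [Finset.sum_eq_single i₀]
    · rw [if_pos, mul_one]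
      ext j
      simp [i₀]
    · intro b _ hb
      rw [if_neg, mul_zero]
      intro hbe
      apply hb
      funext j
      have := DFunLike.congr_fun hbe j
      change ((b j : ℕ)) = e j at this
      exact Fin.ext (by simpa [i₀] using this)
    · intro h; exact absurd (Finset.mem_univ i₀) h
  · push_neg at hbig
    obtain ⟨j, hj⟩ := hbig
    rw [Finset.sum_eq_zero, WalkCount_eq_zero_of_big hsteps j (by exact_mod_cast hj)]
    · simp
    · intro b _
      rw [if_neg, mul_zero]
      intro hbe
      have := DFunLike.congr_fun hbe j
      change ((b j : ℕ)) = e j at this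
      omega

lemma walkGF_coeff_zero (d : ℕ) (S : Finset (Fin d → ℤ)) :
    PowerSeries.coeff 0 (walkGF d S) = 1 := by
  rw [walkGF, PowerSeries.coeff_mk]
  rw [Fintype.sum_subsingleton _ (fun _ => (0 : Fin 1))]
  have h1 : WalkCount d S 0 (fun j => (((0 : Fin 1) : ℕ) : ℤ)) = 1 := by
    rw [WalkCount_eq]
    haveI : Unique (WS d S 0 (fun j => (((0 : Fin 1) : ℕ) : ℤ))) := by
      refine ⟨⟨⟨fun m => m.elim0, ?_, ?_, ?_⟩⟩, ?_⟩
      · intro m; exact m.elim0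
      · intro m k; simp
      · intro k; simp
      · intro w
        apply Subtype.ext
        funext m
        exact m.elim0
    rw [Nat.card_unique]
  rw [h1]
  simp

open MvPolynomial in
lemma prod_X_pow_univ {d : ℕ} (g : Fin d → ℕ) :
    (∏ j, (MvPolynomial.X j : MvPolynomial (Fin d) ℚ) ^ g j) =
      MvPolynomial.monomial (Finsupp.equivFunOnFinite.symm g) 1 := by
  classical
  set f := Finsupp.equivFunOnFinite.symm g with hfdef
  have hf : ∀ j, f j = g j := fun j => rfl
  rw [← MvPolynomial.prod_X_pow_eq_monomial]
  simp_rw [← hf]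
  refine (Finset.prod_subset (Finset.subset_univ _) fun x _ hx => ?_).symm
  have : f x = 0 := by simpa [Finsupp.mem_support_iff] using hx
  simp [this]

open MvPolynomial in
lemma coeff_D {d : ℕ} {S : Finset (Fin d → ℤ)}
    (hsteps : ∀ s ∈ S, (∀ k, s k = -1 ∨ s k = 0 ∨ s k = 1) ∧ s ≠ 0)
    (n : ℕ) (e : Fin d →₀ ℕ) (he : ∀ k, e k ≠ 0) :
    MvPolynomial.coeff e ((∏ j, MvPolynomial.X j) * (PowerSeries.coeff (n+1) (walkGF d S))
      - kerMv d S * (PowerSeries.coeff n (walkGF d S))) = 0 := by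
  classical
  set i : Fin d → ℤ := fun k => (e k : ℤ) - 1 with hidef
  have hi : ∀ k, 0 ≤ i k := by
    intro k; have := he k; simp only [hidef]; omega
  set u : Fin d →₀ ℕ := Finsupp.equivFunOnFinite.symm (fun _ => 1) with hudef
  have hu : ∀ j, u j = 1 := fun _ => rfl
  have hprod : (∏ j, (MvPolynomial.X j : MvPolynomial (Fin d) ℚ)) = monomial u 1 := by
    rw [← prod_X_pow_univ (fun _ => 1)]
    simp
  set ms : (Fin d → ℤ) → (Fin d →₀ ℕ) :=
    fun s => Finsupp.equivFunOnFinite.symm (fun j => (s j + 1).toNat) with hmsdef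
  have hms : ∀ s j, ms s j = (s j + 1).toNat := fun _ _ => rfl
  have hker : kerMv d S = ∑ s ∈ S, monomial (ms s) 1 := by
    unfold kerMv
    exact Finset.sum_congr rfl fun s _ => prod_X_pow_univ _
  have hA : MvPolynomial.coeff e
      ((∏ j, MvPolynomial.X j) * (PowerSeries.coeff (n+1) (walkGF d S))) =
      (WalkCount d S (n+1) i : ℚ) := by
    rw [hprod, MvPolynomial.coeff_monomial_mul', if_pos, one_mul, coeff_walkGF hsteps]
    · have harg : (fun j => (((e - u) j : ℕ) : ℤ)) = i := by
        funext k
        have h1 : (e - u) k = e k - 1 := by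
          rw [Finsupp.tsub_apply, hu]
        rw [h1, hidef]
        have := he k
        push_cast [Nat.cast_sub (by omega : 1 ≤ e k)]
        ring
      rw [harg]
    · rw [Finsupp.le_def]
      intro k
      rw [hu]
      have := he k; omega
  have hB : ∀ s ∈ S, MvPolynomial.coeff e
      (monomial (ms s) 1 * (PowerSeries.coeff n (walkGF d S))) =
      (WalkCount d S n (fun k => i k - s k) : ℚ) := by
    intro s hs
    rw [MvPolynomial.coeff_monomial_mul']
    by_cases hle : ms s ≤ e
    · rw [if_pos hle, one_mul, coeff_walkGF hsteps]
      have harg : (fun j => (((e - ms s) j : ℕ) : ℤ)) = fun k => i k - s k := by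
        funext k
        have hlek : ms s k ≤ e k := hle k
        have h1 : (e - ms s) k = e k - (s k + 1).toNat := by
          rw [Finsupp.tsub_apply, hms]
        rw [h1]
        have hsk := (hsteps s hs).1 k
        have h2 : ((s k + 1).toNat : ℤ) = s k + 1 :=
          Int.toNat_of_nonneg (by rcases hsk with h|h|h <;> omega)
        rw [hms] at hlek
        push_cast [Nat.cast_sub hlek]
        rw [h2, hidef]
        ring
      rw [harg]
    · rw [if_neg hle]
      rw [Finsupp.le_def] at hle
      push_neg at hle
      obtain ⟨k, hk⟩ := hle
      rw [hms] at hk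
      have hsk := (hsteps s hs).1 k
      have hek := he k
      have : i k - s k < 0 := by
        rcases hsk with h|h|h <;> rw [h] at hk <;> simp at hk <;> simp only [hidef] <;> omega
      rw [WalkCount_eq_zero_of_neg k this]
      simp
  rw [MvPolynomial.coeff_sub, sub_eq_zero, hA, hker, Finset.sum_mul, MvPolynomial.coeff_sum]
  rw [Finset.sum_congr rfl hB]
  rw [walkCount_rec S n i hi]
  push_cast
  rfl

open scoped Classical in
/-- Selection of the part of a polynomial whose monomials have first zero exponent at `k`. -/
noncomputable def sel {d : ℕ} (k : Fin d) (p : MvPolynomial (Fin d) ℚ) :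
    MvPolynomial (Fin d) ℚ :=
  ∑ e ∈ p.support.filter (fun e => Fin.find? (fun j => decide (e j = 0)) = some k),
    MvPolynomial.monomial e (MvPolynomial.coeff e p)

lemma coeff_sel {d : ℕ} (k : Fin d) (p : MvPolynomial (Fin d) ℚ) (e : Fin d →₀ ℕ)
    (he : e k ≠ 0) : MvPolynomial.coeff e (sel k p) = 0 := by
  classical
  unfold sel
  rw [MvPolynomial.coeff_sum]
  apply Finset.sum_eq_zero
  intro e' he'
  rw [MvPolynomial.coeff_monomial]
  rw [Finset.mem_filter] at he'
  rw [if_neg]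
  intro h
  subst h
  exact he (of_decide_eq_true (Fin.mem_find?_iff.1 he'.2).1)

lemma sum_sel {d : ℕ} (p : MvPolynomial (Fin d) ℚ)
    (h : ∀ e ∈ p.support, ∃ k, e k = 0) : ∑ k, sel k p = p := by
  classical
  rcases isEmpty_or_nonempty (Fin d) with hd | hd
  · have hp : p = 0 := by
      by_contra hp
      obtain ⟨e, he⟩ : p.support.Nonempty := Finset.nonempty_iff_ne_empty.2 (mt MvPolynomial.support_eq_empty.1 hp)
      obtain ⟨k, _⟩ := h e he
      exact hd.elim k
    simp [hp, sel]
  · inhabit Fin d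
    conv_rhs => rw [← MvPolynomial.support_sum_monomial_coeff p]
    rw [← Finset.sum_fiberwise_of_maps_to
      (g := fun e : Fin d →₀ ℕ => (Fin.find? fun j => decide (e j = 0)).getD default)
      (fun x _ => Finset.mem_univ _)
      (f := fun e => MvPolynomial.monomial e (MvPolynomial.coeff e p))]
    unfold sel
    apply Finset.sum_congr rfl
    intro k _
    apply Finset.sum_congr ?_ (fun _ _ => rfl)
    ext e
    simp only [Finset.mem_filter, and_congr_right_iff]
    intro hes
    obtain ⟨k', hk'⟩ := h e hes
    have hsome : (Fin.find? fun j => decide (e j = 0)).isSome :=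
      Fin.isSome_find?_of_eq_true (i := k') (by simp [hk'])
    obtain ⟨k₀, hk₀⟩ := Option.isSome_iff_exists.1 hsome
    rw [hk₀]
    simp


/-- The kernel functional equation: `(z₁⋯z_d)(1 - tS(z))F(z,t) = z₁⋯z_d + ∑_k A_k`,
where each `A_k` is a power series in `t` whose coefficients are polynomials not
involving the variable `z_k`. -/
theorem kernel_functional_equation (d : ℕ) (S : Finset (Fin d → ℤ))
    (hsteps : ∀ s ∈ S, (∀ k, s k = -1 ∨ s k = 0 ∨ s k = 1) ∧ s ≠ 0)
    (hsym : ∀ s ∈ S, ∀ k, Function.update s k (-(s k)) ∈ S)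
    (hfwd : ∀ k, ∃ s ∈ S, s k = 1) :
    ∃ A : Fin d → PowerSeries (MvPolynomial (Fin d) ℚ),
      (∀ k n (e : Fin d →₀ ℕ), e k ≠ 0 →
          MvPolynomial.coeff e (PowerSeries.coeff n (A k)) = 0) ∧
      (PowerSeries.C (∏ j, MvPolynomial.X j) -
          PowerSeries.X * PowerSeries.C (kerMv d S)) * walkGF d S =
        PowerSeries.C (∏ j, MvPolynomial.X j) + ∑ k, A k := by
  classical
  set P : ℕ → MvPolynomial (Fin d) ℚ := fun n => PowerSeries.coeff n (walkGF d S) with hP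
  set D : ℕ → MvPolynomial (Fin d) ℚ :=
    fun n => (∏ j, MvPolynomial.X j) * P (n+1) - kerMv d S * P n with hD
  have hDsupp : ∀ n, ∀ e ∈ (D n).support, ∃ k, e k = 0 := by
    intro n e hes
    by_contra hc
    push_neg at hc
    rw [MvPolynomial.mem_support_iff] at hes
    exact hes (coeff_D hsteps n e hc)
  refine ⟨fun k => PowerSeries.mk (fun m => Nat.rec 0 (fun n _ => sel k (D n)) m), ?_, ?_⟩
  · intro k n e he
    cases n with
    | zero => simp [PowerSeries.coeff_mk]
    | succ n =>
      rw [PowerSeries.coeff_mk]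
      exact coeff_sel k _ e he
  · refine PowerSeries.ext fun n => ?_
    rw [map_add, map_sum, sub_mul, map_sub, mul_assoc, PowerSeries.coeff_C_mul]
    simp only [PowerSeries.coeff_mk]
    cases n with
    | zero =>
      have hX0 : (PowerSeries.coeff 0)
          (PowerSeries.X * (PowerSeries.C (kerMv d S) * walkGF d S)) = 0 := by
        rw [PowerSeries.coeff_zero_eq_constantCoeff, map_mul, PowerSeries.constantCoeff_X,
          zero_mul]
      have hrec0 : ∀ k : Fin d,
          (Nat.rec 0 (fun n _ => sel k (D n)) 0 : MvPolynomial (Fin d) ℚ) = 0 := fun _ => rfl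
      rw [hX0, sub_zero, walkGF_coeff_zero, mul_one, PowerSeries.coeff_zero_C]
      rw [Finset.sum_congr rfl (fun k _ => hrec0 k), Finset.sum_const_zero, add_zero]
    | succ n =>
      rw [PowerSeries.coeff_succ_X_mul, PowerSeries.coeff_C_mul, PowerSeries.coeff_C,
        if_neg (Nat.succ_ne_zero n)]
      have hrec : ∀ k : Fin d,
          (Nat.rec 0 (fun n _ => sel k (D n)) (n+1) : MvPolynomial (Fin d) ℚ) = sel k (D n) :=
        fun _ => rfl
      rw [Finset.sum_congr rfl (fun k _ => hrec k), sum_sel (D n) (hDsupp n)]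
      rw [hD]
      ring
end

section
/- Consider the 3-dimensional step set S = {(−1,0,±1),(1,0,±1),(0,1,±1),(0,−1,±1)} of 8 steps. Its characteristic polynomial is S(x,y,z) = (x + x^{−1} + y + y^{−1})(z + z^{−1}), and the denominator polynomial H = 1 − t(z²+1)(x+y)(xy+1) is smooth: H and its four partial derivatives H_x, H_y, H_z, H_t generate the unit ideal in ℚ[x,y,z,t] (equivalently, have no common complex zero). -/
/-- `H(x,y,z,t) = 1 - t(z²+1)(x+y)(xy+1)`, the kernel denominator for the 3-dimensional
step set `{(±1,0,±1),(0,±1,±1)}`. -/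
def H8 (x y z t : ℂ) : ℂ := 1 - t * (z ^ 2 + 1) * (x + y) * (x * y + 1)

/-- For the 8-step 3-dimensional model `{(-1,0,±1),(1,0,±1),(0,1,±1),(0,-1,±1)}`:
the characteristic polynomial is `S(x,y,z) = (x + x⁻¹ + y + y⁻¹)(z + z⁻¹)`, and the
denominator `H = 1 - t(z²+1)(x+y)(xy+1)` is smooth: `H` and its four partial
derivatives have no common complex zero. -/
theorem eight_step_smooth :
    (∀ x y z : ℂ, x ≠ 0 → y ≠ 0 → z ≠ 0 →
        x * z + x * z⁻¹ + x⁻¹ * z + x⁻¹ * z⁻¹ + y * z + y * z⁻¹ + y⁻¹ * z + y⁻¹ * z⁻¹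
          = (x + x⁻¹ + y + y⁻¹) * (z + z⁻¹)) ∧
    ¬ ∃ x y z t : ℂ,
        H8 x y z t = 0 ∧
        deriv (fun x' => H8 x' y z t) x = 0 ∧
        deriv (fun y' => H8 x y' z t) y = 0 ∧
        deriv (fun z' => H8 x y z' t) z = 0 ∧
        deriv (fun t' => H8 x y z t') t = 0 := by
  constructor
  · intro x y z hx hy hz
    field_simp
    ring_nf
  · rintro ⟨x, y, z, t, h0, -, -, -, h4⟩
    have hd : HasDerivAt (fun t' : ℂ => H8 x y z t')
        (-((z ^ 2 + 1) * (x + y) * (x * y + 1))) t := by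
      have := (((hasDerivAt_id t).mul_const ((z ^ 2 + 1) * (x + y) * (x * y + 1))).const_sub 1)
      simp only [one_mul] at this
      refine this.congr_of_eventuallyEq (Filter.Eventually.of_forall fun t' => ?_)
      simp [H8]; ring
    have hc : (z ^ 2 + 1) * (x + y) * (x * y + 1) = 0 := by
      have := hd.deriv
      rw [h4] at this
      linear_combination this
    have : H8 x y z t = 1 := by
      simp only [H8]
      linear_combination -t * hc
    rw [h0] at this
    exact zero_ne_one this
end

section
/- For the 3-dimensional step set with xyz·S = (z²+1)(x+y)(xy+1), the solution set in ℂ⁴ of the critical point system {H = 0, tH_t = xH_x, tH_t = yH_y, tH_t = zH_z}, where H = 1 − t(z²+1)(x+y)(xy+1), is exactly the set of points with z² = 1, y² = 1, x = y, and 8t = y; i.e., the four points (1,1,±1,1/8) and (−1,−1,±1,−1/8). -/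
lemma H8_deriv_t (x y z t : ℂ) :
    deriv (fun t' => H8 x y z t') t = -((z ^ 2 + 1) * (x + y) * (x * y + 1)) := by
  have h : HasDerivAt (fun t' => H8 x y z t')
      (-((z ^ 2 + 1) * (x + y) * (x * y + 1))) t := by
    unfold H8
    have h1 : HasDerivAt (fun t' : ℂ => t' * ((z ^ 2 + 1) * (x + y) * (x * y + 1)))
        ((z ^ 2 + 1) * (x + y) * (x * y + 1)) t := by
      simpa using (hasDerivAt_id t).mul_const ((z ^ 2 + 1) * (x + y) * (x * y + 1))
    have h2 := h1.const_sub 1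
    convert h2 using 2 with t'
    · rfl
    · rfl
    · ring
  exact h.deriv

lemma H8_deriv_x (x y z t : ℂ) :
    deriv (fun x' => H8 x' y z t) x = -(t * (z ^ 2 + 1) * ((x * y + 1) + (x + y) * y)) := by
  have h : HasDerivAt (fun x' => H8 x' y z t)
      (-(t * (z ^ 2 + 1) * ((x * y + 1) + (x + y) * y))) x := by
    unfold H8
    have h1 : HasDerivAt (fun x' : ℂ => t * (z ^ 2 + 1) * (x' + y))
        (t * (z ^ 2 + 1)) x := by
      simpa using ((hasDerivAt_id x).add_const y).const_mul (t * (z ^ 2 + 1))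
    have h2 : HasDerivAt (fun x' : ℂ => x' * y + 1) y x := by
      simpa using ((hasDerivAt_id x).mul_const y).add_const (1 : ℂ)
    have h3 := (h1.mul h2).const_sub 1
    convert h3 using 1
    · rfl
    · rfl
    · rfl
    · ring
  exact h.deriv

lemma H8_deriv_y (x y z t : ℂ) :
    deriv (fun y' => H8 x y' z t) y = -(t * (z ^ 2 + 1) * ((x * y + 1) + (x + y) * x)) := by
  have h : HasDerivAt (fun y' => H8 x y' z t)
      (-(t * (z ^ 2 + 1) * ((x * y + 1) + (x + y) * x))) y := by
    unfold H8
    have h1 : HasDerivAt (fun y' : ℂ => t * (z ^ 2 + 1) * (x + y'))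
        (t * (z ^ 2 + 1)) y := by
      simpa using ((hasDerivAt_id y).const_add x).const_mul (t * (z ^ 2 + 1))
    have h2 : HasDerivAt (fun y' : ℂ => x * y' + 1) x y := by
      simpa using ((hasDerivAt_id y).const_mul x).add_const (1 : ℂ)
    have h3 := (h1.mul h2).const_sub 1
    convert h3 using 1
    · rfl
    · rfl
    · rfl
    · ring
  exact h.deriv

lemma H8_deriv_z (x y z t : ℂ) :
    deriv (fun z' => H8 x y z' t) z = -(t * (2 * z) * (x + y) * (x * y + 1)) := by
  have h : HasDerivAt (fun z' => H8 x y z' t)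
      (-(t * (2 * z) * (x + y) * (x * y + 1))) z := by
    unfold H8
    have h1 : HasDerivAt (fun z' : ℂ => z' ^ 2 + 1) (2 * z) z := by
      simpa using (hasDerivAt_pow 2 z).add_const (1 : ℂ)
    have h2 : HasDerivAt (fun z' : ℂ => t * (z' ^ 2 + 1) * (x + y) * (x * y + 1))
        (t * (2 * z) * (x + y) * (x * y + 1)) z := by
      exact ((h1.const_mul t).mul_const (x + y)).mul_const (x * y + 1)
    exact h2.const_sub 1
  exact h.deriv

/-- The solution set in `ℂ⁴` of the critical point system
`{H = 0, tH_t = xH_x, tH_t = yH_y, tH_t = zH_z}` is exactly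
`{z² = 1, y² = 1, x = y, 8t = y}`, i.e. the four points
`(1,1,±1,1/8)` and `(-1,-1,±1,-1/8)`. -/
theorem eight_step_critical_points (x y z t : ℂ) :
    ((H8 x y z t = 0 ∧
      t * deriv (fun t' => H8 x y z t') t = x * deriv (fun x' => H8 x' y z t) x ∧
      t * deriv (fun t' => H8 x y z t') t = y * deriv (fun y' => H8 x y' z t) y ∧
      t * deriv (fun t' => H8 x y z t') t = z * deriv (fun z' => H8 x y z' t) z) ↔
      (z ^ 2 = 1 ∧ y ^ 2 = 1 ∧ x = y ∧ 8 * t = y)) ∧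
    ((z ^ 2 = 1 ∧ y ^ 2 = 1 ∧ x = y ∧ 8 * t = y) ↔
      ((x, y, z, t) = (1, 1, 1, 1 / 8) ∨ (x, y, z, t) = (1, 1, -1, 1 / 8) ∨
        (x, y, z, t) = (-1, -1, 1, -1 / 8) ∨ (x, y, z, t) = (-1, -1, -1, -1 / 8))) := by
  rw [H8_deriv_t, H8_deriv_x, H8_deriv_y, H8_deriv_z]
  unfold H8
  constructor
  · constructor
    · rintro ⟨h0, h2, h3, h4⟩
      -- product equals 1, hence all factors nonzero
      have hp : (t * (z ^ 2 + 1)) * ((x + y) * (x * y + 1)) = 1 := by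
        linear_combination -h0
      have hp2 : (t * (z ^ 2 + 1)) * ((x + y) * (x * y + 1)) ≠ 0 := by
        rw [hp]; exact one_ne_zero
      have hA : t * (z ^ 2 + 1) ≠ 0 := left_ne_zero_of_mul hp2
      have hB : (x + y) * (x * y + 1) ≠ 0 := right_ne_zero_of_mul hp2
      have ht : t ≠ 0 := left_ne_zero_of_mul hA
      have hxy : x + y ≠ 0 := left_ne_zero_of_mul hB
      -- z² = 1
      have hz2 : z ^ 2 = 1 := by
        have h4' : (t * ((x + y) * (x * y + 1))) * (z ^ 2 - 1) = 0 := by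
          linear_combination h4
        have htB : t * ((x + y) * (x * y + 1)) ≠ 0 := mul_ne_zero ht hB
        have hres := (mul_eq_zero.mp h4').resolve_left htB
        linear_combination hres
      -- the two coordinate equations
      have hE2 : (t * (z ^ 2 + 1)) * (y - x ^ 2 * y) = 0 := by
        linear_combination -h2
      have hE3 : (t * (z ^ 2 + 1)) * (x - x * y ^ 2) = 0 := by
        linear_combination -h3
      have E2 := (mul_eq_zero.mp hE2).resolve_left hA
      have E3 := (mul_eq_zero.mp hE3).resolve_left hA
      -- xy = 1
      have hsum : (x + y) * (1 - x * y) = 0 := by linear_combination E2 + E3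
      have h1xy : 1 - x * y = 0 := (mul_eq_zero.mp hsum).resolve_left hxy
      have hx0 : x ≠ 0 := by
        intro h
        rw [h] at h1xy
        simp at h1xy
      have hy2 : y ^ 2 = 1 := by
        have hE3' : x * (1 - y ^ 2) = 0 := by linear_combination E3
        have := (mul_eq_zero.mp hE3').resolve_left hx0
        linear_combination -this
      have hxeq : x = y := by linear_combination (-y) * h1xy + (-x) * hy2
      subst hxeq
      refine ⟨hz2, hy2, rfl, ?_⟩
      linear_combination (-x) * h0 + (-2 * t * (x ^ 4 + x ^ 2)) * hz2 +
        (-4 * t * (x ^ 2 + 2)) * hy2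
    · rintro ⟨hz, hy, hxy, ht⟩
      subst hxy
      refine ⟨?_, ?_, ?_, ?_⟩
      · linear_combination (-2 * t * x * (x ^ 2 + 1)) * hz + (-4 * t * x - 1) * hy +
          (-x) * ht
      · linear_combination (t * x * (z ^ 2 + 1)) * hy
      · linear_combination (t * x * (z ^ 2 + 1)) * hy
      · linear_combination (2 * t * x * (x ^ 2 + 1)) * hz
  · constructor
    · rintro ⟨hz, hy, hxy, ht⟩
      subst hxy
      have ht' : t = x / 8 := by linear_combination ht / 8
      have hyc : x = 1 ∨ x = -1 := by
        have : (x - 1) * (x + 1) = 0 := by linear_combination hy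
        rcases mul_eq_zero.mp this with h | h
        · left; linear_combination h
        · right; linear_combination h
      have hzc : z = 1 ∨ z = -1 := by
        have : (z - 1) * (z + 1) = 0 := by linear_combination hz
        rcases mul_eq_zero.mp this with h | h
        · left; linear_combination h
        · right; linear_combination h
      subst ht'
      rcases hyc with h | h <;> rcases hzc with h' | h' <;> subst h <;> subst h' <;>
        norm_num
    · rintro (h | h | h | h) <;>
      · simp only [Prod.mk.injEq] at h
        obtain ⟨hx, hy, hz, ht⟩ := h
        subst hx; subst hy; subst hz; subst ht
        norm_num
end
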